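/- For x ∈ SO(n) (so x·xᵀ = I), the κ-operator on coordinate functions simplifies to κ(x_{ij}, x_{kl}) = (1/2)(δ_{ik}δ_{jl} - x_{il}x_{kj}). -/

import Mathlib

open Matrix

theorem stmt11 (n : ℕ) (x : Matrix (Fin n) (Fin n) ℝ)
    (hx : x * xᵀ = 1)
    (Y : Fin n → Fin n → Matrix (Fin n) (Fin n) ℝ)
    (hY : ∀ r s, Y r s =
      (Real.sqrt 2)⁻¹ • (Matrix.single r s (1 : ℝ) - Matrix.single s r 1))
    (i j k l : Fin n) :
    (∑ r : Fin n, ∑ s : Fin n, if r < s then (x * Y r s) i j * (x * Y r s) k l else 0) =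
      (1/2 : ℝ) * ((if i = k then (1 : ℝ) else 0) * (if j = l then (1 : ℝ) else 0)
        - x i l * x k j) := by
  have hs2 : (Real.sqrt 2)⁻¹ * (Real.sqrt 2)⁻¹ = 2⁻¹ := by
    rw [← mul_inv]
    rw [Real.mul_self_sqrt (by norm_num)]
  have hentry : ∀ (r s a b : Fin n), (x * Y r s) a b =
      (Real.sqrt 2)⁻¹ * ((if s = b then x a r else 0) - (if r = b then x a s else 0)) := by
    intro r s a b
    rw [hY]
    simp [Matrix.mul_apply, Matrix.single, mul_sub, Finset.sum_sub_distrib,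
      Finset.mul_sum, ite_and, mul_ite, Finset.sum_ite_eq']
    split_ifs <;> ring
  set f : Fin n → Fin n → ℝ := fun r s => (x * Y r s) i j * (x * Y r s) k l with hf
  have hfval : ∀ r s, f r s = 2⁻¹ *
      (((if s = j then x i r else 0) - (if r = j then x i s else 0)) *
       ((if s = l then x k r else 0) - (if r = l then x k s else 0))) := by
    intro r s
    simp only [hf, hentry]
    rw [show ∀ a b c d : ℝ, (a*b)*(c*d) = (a*c)*(b*d) by intros; ring, hs2]
  have hsymm : ∀ r s, f s r = f r s := by
    intro r s; rw [hfval, hfval]; ring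
  have hdiag : ∀ r, f r r = 0 := by
    intro r; rw [hfval]; by_cases h1 : r = j <;> by_cases h2 : r = l <;> simp [h1, h2]
  have hortho : ∀ a b : Fin n, (∑ r : Fin n, x a r * x b r) = if a = b then 1 else 0 := by
    intro a b
    have := congrFun (congrFun hx a) b
    simpa [Matrix.mul_apply, Matrix.one_apply, Matrix.transpose_apply] using this
  have inner : ∀ r, (∑ s : Fin n, f r s) = 2⁻¹ *
      ((if j = l then x i r * x k r else 0)
       - (if r = l then x i r * x k j else 0)
       - (if r = j then x i l * x k r else 0)
       + (if r = j then (if r = l then (if i = k then (1:ℝ) else 0) else 0) else 0)) := by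
    intro r
    have e : ∀ s, f r s =
        2⁻¹ * ((if s = j then x i r else 0) * (if s = l then x k r else 0))
        - 2⁻¹ * ((if s = j then x i r else 0) * (if r = l then x k s else 0))
        - 2⁻¹ * ((if r = j then x i s else 0) * (if s = l then x k r else 0))
        + 2⁻¹ * ((if r = j then x i s else 0) * (if r = l then x k s else 0)) := by
      intro s; rw [hfval]; ring
    have e1 : ∀ s : Fin n, (if s = j then x i r else 0) * (if s = l then x k r else 0)
        = if s = j then (if j = l then x i r * x k r else 0) else 0 := by
      intro s
      by_cases h1 : s = j
      · subst h1; by_cases h2 : s = l <;> simp [h2]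
      · simp [h1]
    have e2 : ∀ s : Fin n, (if s = j then x i r else 0) * (if r = l then x k s else 0)
        = if s = j then (if r = l then x i r * x k j else 0) else 0 := by
      intro s
      by_cases h1 : s = j
      · subst h1; by_cases h2 : r = l <;> simp [h2]
      · simp [h1]
    have e3 : ∀ s : Fin n, (if r = j then x i s else 0) * (if s = l then x k r else 0)
        = if s = l then (if r = j then x i l * x k r else 0) else 0 := by
      intro s
      by_cases h1 : s = l
      · subst h1; by_cases h2 : r = j <;> simp [h2]
      · simp [h1]
    have e4 : ∀ s : Fin n, (if r = j then x i s else 0) * (if r = l then x k s else 0)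
        = if r = j then (if r = l then x i s * x k s else 0) else 0 := by
      intro s; by_cases h1 : r = j <;> by_cases h2 : r = l <;> simp [h1, h2]
    simp only [e, e1, e2, e3, e4, Finset.sum_add_distrib, Finset.sum_sub_distrib,
      ← Finset.mul_sum, Finset.sum_ite_eq', Finset.mem_univ, if_true]
    rw [show (∑ s : Fin n, if r = j then (if r = l then x i s * x k s else 0) else 0)
        = if r = j then (if r = l then ∑ s : Fin n, x i s * x k s else 0) else 0 by
      by_cases h1 : r = j <;> by_cases h2 : r = l <;> simp [h1, h2]]
    rw [hortho]
    ring
  have hfull : (∑ r : Fin n, ∑ s : Fin n, f r s) =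
      (if i = k then (1 : ℝ) else 0) * (if j = l then (1 : ℝ) else 0) - x i l * x k j := by
    simp only [inner, ← Finset.mul_sum, Finset.sum_add_distrib, Finset.sum_sub_distrib,
      Finset.sum_ite_eq', Finset.mem_univ, if_true]
    rw [show (∑ r : Fin n, if j = l then x i r * x k r else 0)
        = if j = l then ∑ r : Fin n, x i r * x k r else 0 by
      by_cases h : j = l <;> simp [h]]
    rw [hortho]
    by_cases h1 : j = l <;> by_cases h2 : i = k <;> simp [h1, h2] <;> ring
  have hsplit : ∀ r s : Fin n, f r s =
      (if r < s then f r s else 0) + (if s < r then f r s else 0) + (if r = s then f r s else 0) := by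
    intro r s
    rcases lt_trichotomy r s with h | h | h
    · simp [h, not_lt_of_gt h, h.ne]
    · simp [h, lt_irrefl]
    · simp [h, not_lt_of_gt h, (ne_of_lt h).symm]
  have h1 : (∑ r : Fin n, ∑ s : Fin n, f r s) =
      (∑ r : Fin n, ∑ s : Fin n, if r < s then f r s else 0)
      + (∑ r : Fin n, ∑ s : Fin n, if s < r then f r s else 0)
      + (∑ r : Fin n, ∑ s : Fin n, if r = s then f r s else 0) := by
    simp only [← Finset.sum_add_distrib]
    exact Finset.sum_congr rfl fun r _ => Finset.sum_congr rfl fun s _ => hsplit r s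
  have h2 : (∑ r : Fin n, ∑ s : Fin n, if s < r then f r s else 0)
      = (∑ r : Fin n, ∑ s : Fin n, if r < s then f r s else 0) := by
    rw [Finset.sum_comm]
    exact Finset.sum_congr rfl fun r _ => Finset.sum_congr rfl fun s _ => by
      by_cases h : r < s <;> simp [h, hsymm]
  have h3 : (∑ r : Fin n, ∑ s : Fin n, if r = s then f r s else 0) = 0 := by
    apply Finset.sum_eq_zero; intro r _
    apply Finset.sum_eq_zero; intro s _
    by_cases h : r = s <;> simp [h, hdiag]
  have := h1
  rw [h2, h3, add_zero, hfull] at this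
  linarith [this]
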